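/- Let A be a normal n×n complex matrix with Cartesian decomposition A = Re(A) + i·Im(A), where Re(A) = (A + A*)/2 and Im(A) = (A − A*)/(2i). Then for every j: (1/√2)·s_j(Re(A) + Im(A)) ≤ s_j(A) ≤ s_j(|Re(A)| + |Im(A)|). -/

import Mathlib

open Matrix
open scoped ComplexOrder

/-- The `j`-th largest singular value of a square complex matrix (`j : Fin m`, zero-indexed,
so `sv A 0` is the largest singular value). It is defined as the square root of the `j`-th
largest eigenvalue of `Aᴴ * A`. -/
noncomputable def sv {m : ℕ} (A : Matrix (Fin m) (Fin m) ℂ) (j : Fin m) : ℝ :=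
  Real.sqrt ((Matrix.isHermitian_conjTranspose_mul_self A).eigenvalues
    (Tuple.sort ((Matrix.isHermitian_conjTranspose_mul_self A).eigenvalues) j.rev))

/-- The positive semidefinite square root of a positive semidefinite matrix
(the former `Matrix.PosSemidef.sqrt`). -/
noncomputable def psdSqrt {m : ℕ} {P : Matrix (Fin m) (Fin m) ℂ} (hP : P.PosSemidef) :
    Matrix (Fin m) (Fin m) ℂ :=
  (hP.1.eigenvectorUnitary : Matrix (Fin m) (Fin m) ℂ) *
    Matrix.diagonal ((↑) ∘ (√·) ∘ hP.1.eigenvalues) *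
    (star hP.1.eigenvectorUnitary : Matrix (Fin m) (Fin m) ℂ)

theorem psdSqrt_isHermitian {m : ℕ} {P : Matrix (Fin m) (Fin m) ℂ} (hP : P.PosSemidef) :
    (psdSqrt hP).IsHermitian := by
  unfold psdSqrt
  rw [Matrix.IsHermitian, Matrix.conjTranspose_mul, Matrix.conjTranspose_mul,
    Matrix.diagonal_conjTranspose, Matrix.mul_assoc]
  congr 2
  · ext i
    simp
  · simp

/-- The absolute value `|A| = (Aᴴ A)^{1/2}` of a square complex matrix. -/
noncomputable def matAbs {m : ℕ} (A : Matrix (Fin m) (Fin m) ℂ) : Matrix (Fin m) (Fin m) ℂ :=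
  psdSqrt (Matrix.posSemidef_conjTranspose_mul_self A)

/-- The `2n × 2n` block matrix `[[A, B], [C, D]]`, reindexed by `Fin (n + n)`. -/
noncomputable def blk {n : ℕ} (A B C D : Matrix (Fin n) (Fin n) ℂ) :
    Matrix (Fin (n + n)) (Fin (n + n)) ℂ :=
  Matrix.reindex finSumFinEquiv finSumFinEquiv (Matrix.fromBlocks A B C D)

/-- `f(P)` for a Hermitian matrix `P`, via the spectral functional calculus. -/
noncomputable def herCfc {m : ℕ} {P : Matrix (Fin m) (Fin m) ℂ} (hP : P.IsHermitian)
    (f : ℝ → ℝ) : Matrix (Fin m) (Fin m) ℂ :=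
  hP.cfc f

/-- `|A| ^ r` (real power of the absolute value), via the functional calculus. -/
noncomputable def matAbsPow {m : ℕ} (A : Matrix (Fin m) (Fin m) ℂ) (r : ℝ) :
    Matrix (Fin m) (Fin m) ℂ :=
  herCfc (psdSqrt_isHermitian (Matrix.posSemidef_conjTranspose_mul_self A)) (fun t => t ^ r)

/-- `f(|A|)`, via the functional calculus. -/
noncomputable def matAbsCfc {m : ℕ} (A : Matrix (Fin m) (Fin m) ℂ) (f : ℝ → ℝ) :
    Matrix (Fin m) (Fin m) ℂ :=
  herCfc (psdSqrt_isHermitian (Matrix.posSemidef_conjTranspose_mul_self A)) f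

/-- The operator norm: the largest singular value. -/
noncomputable def opNorm {m : ℕ} (A : Matrix (Fin m) (Fin m) ℂ) : ℝ :=
  ⨆ j, sv A j

section Aux

open Polynomial

variable {m : ℕ} {M : Matrix (Fin m) (Fin m) ℂ}

private lemma repr_mulVec {P : Matrix (Fin m) (Fin m) ℂ} (hP : P.IsHermitian)
    (x : EuclideanSpace ℂ (Fin m)) (i : Fin m) :
    hP.eigenvectorBasis.repr (WithLp.toLp 2 (P *ᵥ x) : EuclideanSpace ℂ (Fin m)) i =
      (hP.eigenvalues i : ℂ) * hP.eigenvectorBasis.repr x i := by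
  rw [OrthonormalBasis.repr_apply_apply, OrthonormalBasis.repr_apply_apply]
  rw [EuclideanSpace.inner_eq_star_dotProduct, EuclideanSpace.inner_eq_star_dotProduct]
  show (P *ᵥ x) ⬝ᵥ star (⇑(hP.eigenvectorBasis i)) = _ * (x.ofLp ⬝ᵥ star (⇑(hP.eigenvectorBasis i)))
  rw [dotProduct_comm, dotProduct_comm x.ofLp]
  have h1 : star (⇑(hP.eigenvectorBasis i)) ᵥ* P = star (Pᴴ *ᵥ ⇑(hP.eigenvectorBasis i)) := by
    rw [star_mulVec, conjTranspose_conjTranspose]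
  rw [dotProduct_mulVec, h1, hP.eq, hP.mulVec_eigenvectorBasis, star_smul, smul_dotProduct]
  simp [Complex.star_def, Complex.conj_ofReal, smul_eq_mul]

private lemma qf_expand {P : Matrix (Fin m) (Fin m) ℂ} (hP : P.IsHermitian)
    (x : EuclideanSpace ℂ (Fin m)) :
    star (x : Fin m → ℂ) ⬝ᵥ (P *ᵥ x) =
      ((∑ i, hP.eigenvalues i * ‖hP.eigenvectorBasis.repr x i‖ ^ 2 : ℝ) : ℂ) := by
  rw [show (star (x : Fin m → ℂ) ⬝ᵥ (P *ᵥ x)) =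
      (inner ℂ x (WithLp.toLp 2 (P *ᵥ x) : EuclideanSpace ℂ (Fin m)) : ℂ) from by
        rw [EuclideanSpace.inner_eq_star_dotProduct, dotProduct_comm]]
  rw [← hP.eigenvectorBasis.repr.inner_map_map x _]
  rw [EuclideanSpace.inner_eq_star_dotProduct]
  rw [dotProduct]
  push_cast
  refine Finset.sum_congr rfl fun i _ => ?_
  have := repr_mulVec hP x i
  simp only [Pi.star_apply]
  rw [show (hP.eigenvectorBasis.repr (WithLp.toLp 2 (P *ᵥ x) : EuclideanSpace ℂ (Fin m))) i
    = (hP.eigenvalues i : ℂ) * hP.eigenvectorBasis.repr x i from this]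
  rw [RCLike.star_def, mul_assoc]
  rw [Complex.mul_conj']

private lemma norm_sq_expand {P : Matrix (Fin m) (Fin m) ℂ} (hP : P.IsHermitian)
    (x : EuclideanSpace ℂ (Fin m)) :
    ‖x‖ ^ 2 = ∑ i, ‖hP.eigenvectorBasis.repr x i‖ ^ 2 := by
  rw [← hP.eigenvectorBasis.repr.norm_map x, EuclideanSpace.norm_eq, Real.sq_sqrt]
  · exact Finset.sum_nonneg fun i _ => sq_nonneg _

private lemma repr_eq_zero_of_mem_span {b : OrthonormalBasis (Fin m) ℂ (EuclideanSpace ℂ (Fin m))}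
    {J : Set (Fin m)} {x : EuclideanSpace ℂ (Fin m)}
    (hx : x ∈ Submodule.span ℂ (⇑b '' J)) {i : Fin m} (hi : i ∉ J) :
    b.repr x i = 0 := by
  rw [OrthonormalBasis.repr_apply_apply]
  induction hx using Submodule.span_induction with
  | mem y hy =>
    obtain ⟨j, hj, rfl⟩ := hy
    exact b.orthonormal.2 (fun h : i = j => hi (h ▸ hj))
  | zero => simp
  | add y z _ _ hy hz => rw [inner_add_right, hy, hz, add_zero]
  | smul a y _ hy => rw [inner_smul_right, hy, mul_zero]

private lemma qf_ge_of_mem {P : Matrix (Fin m) (Fin m) ℂ} (hP : P.IsHermitian) (k : Fin m)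
    {x : EuclideanSpace ℂ (Fin m)}
    (hx : x ∈ Submodule.span ℂ
      (⇑hP.eigenvectorBasis '' (⇑(Tuple.sort hP.eigenvalues) '' ↑(Finset.Ici k)))) :
    hP.eigenvalues (Tuple.sort hP.eigenvalues k) * ‖x‖ ^ 2 ≤
      ∑ i, hP.eigenvalues i * ‖hP.eigenvectorBasis.repr x i‖ ^ 2 := by
  rw [norm_sq_expand hP, Finset.mul_sum]
  refine Finset.sum_le_sum fun i _ => ?_
  by_cases hi : i ∈ ⇑(Tuple.sort hP.eigenvalues) '' ↑(Finset.Ici k)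
  · obtain ⟨l, hl, rfl⟩ := hi
    have : hP.eigenvalues (Tuple.sort hP.eigenvalues k) ≤
        hP.eigenvalues (Tuple.sort hP.eigenvalues l) :=
      Tuple.monotone_sort hP.eigenvalues (by simpa using hl)
    exact mul_le_mul_of_nonneg_right this (sq_nonneg _)
  · rw [repr_eq_zero_of_mem_span hx hi]
    simp

private lemma qf_le_of_mem {P : Matrix (Fin m) (Fin m) ℂ} (hP : P.IsHermitian) (k : Fin m)
    {x : EuclideanSpace ℂ (Fin m)}
    (hx : x ∈ Submodule.span ℂ
      (⇑hP.eigenvectorBasis '' (⇑(Tuple.sort hP.eigenvalues) '' ↑(Finset.Iic k)))) :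
    ∑ i, hP.eigenvalues i * ‖hP.eigenvectorBasis.repr x i‖ ^ 2 ≤
      hP.eigenvalues (Tuple.sort hP.eigenvalues k) * ‖x‖ ^ 2 := by
  rw [norm_sq_expand hP, Finset.mul_sum]
  refine Finset.sum_le_sum fun i _ => ?_
  by_cases hi : i ∈ ⇑(Tuple.sort hP.eigenvalues) '' ↑(Finset.Iic k)
  · obtain ⟨l, hl, rfl⟩ := hi
    have : hP.eigenvalues (Tuple.sort hP.eigenvalues l) ≤
        hP.eigenvalues (Tuple.sort hP.eigenvalues k) :=
      Tuple.monotone_sort hP.eigenvalues (by simpa using hl)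
    exact mul_le_mul_of_nonneg_right this (sq_nonneg _)
  · rw [repr_eq_zero_of_mem_span hx hi]
    simp

private lemma finrank_span_eig (b : OrthonormalBasis (Fin m) ℂ (EuclideanSpace ℂ (Fin m)))
    (σ : Equiv.Perm (Fin m)) (I : Finset (Fin m)) :
    Module.finrank ℂ (Submodule.span ℂ (⇑b '' (⇑σ '' ↑I))) = I.card := by
  have himg : ⇑b '' (⇑σ '' ↑I) = Set.range (fun l : ↥I => b (σ l)) := by
    rw [← Set.image_comp, Set.image_eq_range]
    rfl
  rw [himg, finrank_span_eq_card]
  · exact Fintype.card_coe I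
  · refine (b.orthonormal.comp _ ?_).linearIndependent
    exact fun a c h => Subtype.ext (σ.injective h)

/-- Weyl-type eigenvalue monotonicity: if `c • Q - P` is positive semidefinite, then every
sorted eigenvalue of `P` is at most `c` times the corresponding sorted eigenvalue of `Q`. -/
private lemma weyl {P Q : Matrix (Fin m) (Fin m) ℂ} (hP : P.IsHermitian) (hQ : Q.IsHermitian)
    {c : ℝ} (hc : 0 ≤ c) (hPQ : ((c : ℂ) • Q - P).PosSemidef) (k : Fin m) :
    hP.eigenvalues (Tuple.sort hP.eigenvalues k) ≤
      c * hQ.eigenvalues (Tuple.sort hQ.eigenvalues k) := by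
  set SP := Submodule.span ℂ
    (⇑hP.eigenvectorBasis '' (⇑(Tuple.sort hP.eigenvalues) '' ↑(Finset.Ici k))) with hSP
  set SQ := Submodule.span ℂ
    (⇑hQ.eigenvectorBasis '' (⇑(Tuple.sort hQ.eigenvalues) '' ↑(Finset.Iic k))) with hSQ
  have hrP : Module.finrank ℂ SP = m - k := by rw [hSP, finrank_span_eig, Fin.card_Ici]
  have hrQ : Module.finrank ℂ SQ = k + 1 := by rw [hSQ, finrank_span_eig, Fin.card_Iic]
  have hsup : Module.finrank ℂ ↥(SP ⊔ SQ) ≤ m :=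
    le_trans (Submodule.finrank_le _) (le_of_eq finrank_euclideanSpace_fin)
  have hsum := Submodule.finrank_sup_add_finrank_inf_eq SP SQ
  have hpos : 0 < Module.finrank ℂ ↥(SP ⊓ SQ) := by
    have hk : (k : ℕ) < m := k.isLt
    omega
  have : Nontrivial ↥(SP ⊓ SQ) := Module.nontrivial_of_finrank_pos hpos
  obtain ⟨y, hy⟩ := exists_ne (0 : ↥(SP ⊓ SQ))
  set x : EuclideanSpace ℂ (Fin m) := (y : EuclideanSpace ℂ (Fin m)) with hxdef
  have hx0 : x ≠ 0 := fun h => hy (Subtype.ext h)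
  have hxP : x ∈ SP := y.2.1
  have hxQ : x ∈ SQ := y.2.2
  have e1 := qf_ge_of_mem hP k hxP
  have e2 := qf_le_of_mem hQ k hxQ
  have epsd := hPQ.dotProduct_mulVec_nonneg x.ofLp
  rw [sub_mulVec, smul_mulVec, dotProduct_sub, dotProduct_smul,
    qf_expand hP x, qf_expand hQ x] at epsd
  have emid : (∑ i, hP.eigenvalues i * ‖hP.eigenvectorBasis.repr x i‖ ^ 2) ≤
      c * ∑ i, hQ.eigenvalues i * ‖hQ.eigenvectorBasis.repr x i‖ ^ 2 := by
    rw [smul_eq_mul, ← Complex.ofReal_mul, ← Complex.ofReal_sub, Complex.zero_le_real] at epsd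
    linarith
  have hn : 0 < ‖x‖ ^ 2 := pow_pos (norm_pos_iff.mpr hx0) 2
  have chain : hP.eigenvalues (Tuple.sort hP.eigenvalues k) * ‖x‖ ^ 2 ≤
      (c * hQ.eigenvalues (Tuple.sort hQ.eigenvalues k)) * ‖x‖ ^ 2 := by
    calc hP.eigenvalues (Tuple.sort hP.eigenvalues k) * ‖x‖ ^ 2 ≤ _ := e1
    _ ≤ c * ∑ i, hQ.eigenvalues i * ‖hQ.eigenvectorBasis.repr x i‖ ^ 2 := emid
    _ ≤ _ := by
        rw [mul_assoc]
        exact mul_le_mul_of_nonneg_left e2 hc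
  exact le_of_mul_le_mul_right chain hn

private lemma sqrt_eq_cfc (hM : M.PosSemidef) : psdSqrt hM = hM.1.cfc Real.sqrt := by
  unfold psdSqrt Matrix.IsHermitian.cfc
  rw [Unitary.conjStarAlgAut_apply]
  rfl

private lemma mcfc_add (hM : M.IsHermitian) (f g : ℝ → ℝ) :
    hM.cfc f + hM.cfc g = hM.cfc (fun t => f t + g t) := by
  unfold Matrix.IsHermitian.cfc
  simp only [Unitary.conjStarAlgAut_apply]
  rw [← add_mul, ← mul_add, diagonal_add]
  congr 2
  exact congrArg _ (funext fun i => by simp)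

private lemma mcfc_mul (hM : M.IsHermitian) (f g : ℝ → ℝ) :
    hM.cfc f * hM.cfc g = hM.cfc (fun t => f t * g t) := by
  unfold Matrix.IsHermitian.cfc
  simp only [Unitary.conjStarAlgAut_apply]
  have h1 : (star hM.eigenvectorUnitary : Matrix (Fin m) (Fin m) ℂ) *
      (hM.eigenvectorUnitary : Matrix (Fin m) (Fin m) ℂ) = 1 :=
    Unitary.star_mul_self_of_mem (SetLike.coe_mem _)
  have h3 : ∀ X : Matrix (Fin m) (Fin m) ℂ,
      (star hM.eigenvectorUnitary : Matrix (Fin m) (Fin m) ℂ) *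
        ((hM.eigenvectorUnitary : Matrix (Fin m) (Fin m) ℂ) * X) = X := fun X => by
    rw [← mul_assoc, h1, one_mul]
  simp only [mul_assoc, h3]
  rw [← mul_assoc (diagonal _) (diagonal _), diagonal_mul_diagonal]
  congr 2
  exact congrArg _ (funext fun i => by simp)

private lemma mcfc_id (hM : M.IsHermitian) : hM.cfc (fun t => t) = M := by
  unfold Matrix.IsHermitian.cfc
  have := hM.spectral_theorem
  simp only [Unitary.conjStarAlgAut_apply] at this ⊢
  exact this.symm

private lemma mcfc_const (hM : M.IsHermitian) (a : ℝ) :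
    hM.cfc (fun _ => a) = algebraMap ℝ (Matrix (Fin m) (Fin m) ℂ) a := by
  unfold Matrix.IsHermitian.cfc
  have h2 : (hM.eigenvectorUnitary : Matrix (Fin m) (Fin m) ℂ) *
      (star hM.eigenvectorUnitary : Matrix (Fin m) (Fin m) ℂ) = 1 :=
    Unitary.mul_star_self_of_mem (SetLike.coe_mem _)
  have : diagonal (RCLike.ofReal ∘ (fun _ : ℝ => a) ∘ hM.eigenvalues) =
      (a : ℂ) • (1 : Matrix (Fin m) (Fin m) ℂ) := by
    ext i j
    by_cases h : i = j <;> simp [h, Matrix.one_apply, Matrix.diagonal_apply]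
  simp only [Unitary.conjStarAlgAut_apply]
  rw [this, mul_smul_comm, smul_mul_assoc, mul_one, h2,
    IsScalarTower.algebraMap_apply ℝ ℂ (Matrix (Fin m) (Fin m) ℂ),
    Algebra.algebraMap_eq_smul_one]
  norm_num

private lemma mcfc_congr (hM : M.IsHermitian) {f g : ℝ → ℝ}
    (h : ∀ i, f (hM.eigenvalues i) = g (hM.eigenvalues i)) : hM.cfc f = hM.cfc g := by
  unfold Matrix.IsHermitian.cfc
  have : (RCLike.ofReal ∘ f ∘ hM.eigenvalues : Fin m → ℂ) =
      RCLike.ofReal ∘ g ∘ hM.eigenvalues := by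
    funext i; simp [h i]
  rw [this]

private lemma aeval_eq_mcfc (hM : M.IsHermitian) (p : ℝ[X]) :
    Polynomial.aeval M p = hM.cfc (fun t => p.eval t) := by
  induction p using Polynomial.induction_on with
  | C a => rw [aeval_C]; simp only [eval_C]; exact (mcfc_const hM a).symm
  | add p q hp hq =>
    rw [map_add, hp, hq, mcfc_add hM]
    exact mcfc_congr hM (by simp)
  | monomial n a ih =>
    have h2 := mcfc_mul hM (fun t => eval t (C a * X ^ n)) (fun t => t)
    rw [mcfc_id hM] at h2
    rw [pow_succ, ← mul_assoc, _root_.map_mul, ih, aeval_X, h2]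
    exact mcfc_congr hM (by simp [mul_assoc])

private lemma exists_poly_mcfc (hM : M.IsHermitian) (f : ℝ → ℝ) :
    ∃ p : ℝ[X], hM.cfc f = Polynomial.aeval M p := by
  classical
  refine ⟨Lagrange.interpolate (Finset.image hM.eigenvalues Finset.univ) id f, ?_⟩
  rw [aeval_eq_mcfc hM]
  refine mcfc_congr hM fun i => ?_
  exact (Lagrange.eval_interpolate_at_node f (Set.injOn_id _)
    (Finset.mem_image_of_mem _ (Finset.mem_univ i))).symm

private lemma commute_aeval {B : Matrix (Fin m) (Fin m) ℂ} (h : Commute B M) (p : ℝ[X]) :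
    Commute B (Polynomial.aeval M p) := by
  induction p using Polynomial.induction_on' with
  | add p q hp hq => rw [map_add]; exact hp.add_right hq
  | monomial n a =>
    rw [Polynomial.aeval_monomial]
    exact (Algebra.commute_algebraMap_right a B).mul_right (h.pow_right n)

private lemma commute_mcfc {B : Matrix (Fin m) (Fin m) ℂ} (hM : M.IsHermitian) (f : ℝ → ℝ)
    (h : Commute B M) : Commute B (hM.cfc f) := by
  obtain ⟨p, hp⟩ := exists_poly_mcfc hM f
  rw [hp]
  exact commute_aeval h p

private lemma mcfc_posSemidef (hM : M.IsHermitian) (f : ℝ → ℝ) (hf : ∀ t, 0 ≤ f t) :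
    (hM.cfc f).PosSemidef := by
  unfold Matrix.IsHermitian.cfc
  simp only [Unitary.conjStarAlgAut_apply]
  have hD : (diagonal (RCLike.ofReal ∘ f ∘ hM.eigenvalues) :
      Matrix (Fin m) (Fin m) ℂ).PosSemidef := by
    refine PosSemidef.diagonal fun i => ?_
    exact Complex.zero_le_real.mpr (hf _)
  simpa [Matrix.star_eq_conjTranspose] using
    hD.mul_mul_conjTranspose_same (hM.eigenvectorUnitary : Matrix (Fin m) (Fin m) ℂ)

private lemma matAbs_eq_mcfc {H : Matrix (Fin m) (Fin m) ℂ} (hH : H.IsHermitian) :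
    matAbs H = hH.cfc (fun t => |t|) := by
  unfold matAbs
  have hsa : IsSelfAdjoint H := hH
  rw [sqrt_eq_cfc, ← IsHermitian.cfc_eq, ← IsHermitian.cfc_eq]
  simp only [hH.eq]
  rw [show H * H = cfc (fun t : ℝ => t * t) H from by
    rw [cfc_mul (fun t : ℝ => t) (fun t => t) H, cfc_id' ℝ H],
    ← cfc_comp Real.sqrt (fun t : ℝ => t * t) H]
  exact cfc_congr fun x _ => by simp [Real.sqrt_mul_self_eq_abs]

private lemma psdSqrt_mul_self {P : Matrix (Fin m) (Fin m) ℂ} (hP : P.PosSemidef) :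
    psdSqrt hP * psdSqrt hP = P := by
  rw [sqrt_eq_cfc, mcfc_mul]
  rw [mcfc_congr hP.1 (g := fun t => t) fun i => Real.mul_self_sqrt (hP.eigenvalues_nonneg i),
    mcfc_id]

private lemma posSemidef_psdSqrt {P : Matrix (Fin m) (Fin m) ℂ} (hP : P.PosSemidef) :
    (psdSqrt hP).PosSemidef := by
  rw [sqrt_eq_cfc]
  exact mcfc_posSemidef hP.1 _ Real.sqrt_nonneg

private lemma posSemidef_mul_of_commute {P Q : Matrix (Fin m) (Fin m) ℂ}
    (hP : P.PosSemidef) (hQ : Q.PosSemidef) (h : Commute P Q) : (P * Q).PosSemidef := by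
  have hsq : Commute (psdSqrt hP) Q := by
    rw [sqrt_eq_cfc]
    exact (commute_mcfc hP.1 Real.sqrt h.symm).symm
  have key : P * Q = (psdSqrt hP)ᴴ * Q * (psdSqrt hP) := by
    rw [psdSqrt_isHermitian hP]
    calc P * Q = (psdSqrt hP) * (psdSqrt hP) * Q := by rw [psdSqrt_mul_self hP]
    _ = (psdSqrt hP) * ((psdSqrt hP) * Q) := by rw [mul_assoc]
    _ = (psdSqrt hP) * (Q * (psdSqrt hP)) := by rw [hsq]
    _ = (psdSqrt hP) * Q * (psdSqrt hP) := by rw [mul_assoc]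
  exact key ▸ hQ.conjTranspose_mul_mul_same (psdSqrt hP)

end Aux

theorem sv_normal_cartesian {n : ℕ} (A : Matrix (Fin n) (Fin n) ℂ)
    (hN : Aᴴ * A = A * Aᴴ) :
    ∀ j : Fin n,
      (1 / Real.sqrt 2) *
          sv ((2 : ℂ)⁻¹ • (A + Aᴴ) + (2 * Complex.I)⁻¹ • (A - Aᴴ)) j ≤ sv A j ∧
      sv A j ≤ sv (matAbs ((2 : ℂ)⁻¹ • (A + Aᴴ)) +
        matAbs ((2 * Complex.I)⁻¹ • (A - Aᴴ))) j := by
  intro j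
  set H : Matrix (Fin n) (Fin n) ℂ := (2 : ℂ)⁻¹ • (A + Aᴴ) with hHdef
  set K : Matrix (Fin n) (Fin n) ℂ := (2 * Complex.I)⁻¹ • (A - Aᴴ) with hKdef
  have hH : H.IsHermitian := by
    rw [hHdef]
    unfold Matrix.IsHermitian
    rw [conjTranspose_smul, conjTranspose_add, conjTranspose_conjTranspose, add_comm Aᴴ A]
    congr 1
    simp
  have hK : K.IsHermitian := by
    rw [hKdef]
    unfold Matrix.IsHermitian
    rw [conjTranspose_smul, conjTranspose_sub, conjTranspose_conjTranspose]
    have hs : star ((2 * Complex.I)⁻¹) = -((2 * Complex.I)⁻¹) := by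
      simp [star_inv₀, star_mul', Complex.conj_I, mul_comm]
    rw [hs, neg_smul, ← smul_neg, neg_sub]
  have e0 : (A + Aᴴ) * (A - Aᴴ) = (A - Aᴴ) * (A + Aᴴ) := by
    rw [mul_sub, sub_mul, add_mul, add_mul, mul_add, mul_add, hN]
  have hComm : Commute H K := by
    rw [hHdef, hKdef]
    unfold Commute SemiconjBy
    rw [smul_mul_assoc, smul_mul_assoc, mul_smul_comm, mul_smul_comm, e0, smul_comm]
  have hsum : Aᴴ * A = H * H + K * K := by
    rw [hHdef, hKdef]
    have hI : (2*Complex.I)⁻¹ * (2*Complex.I)⁻¹ = -(4:ℂ)⁻¹ := by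
      rw [← mul_inv]
      have h4 : (2*Complex.I) * (2*Complex.I) = -4 := by
        ring_nf
        rw [Complex.I_sq]
        ring
      rw [h4, inv_neg]
    rw [smul_mul_assoc, mul_smul_comm, smul_smul, smul_mul_assoc, mul_smul_comm, smul_smul, hI]
    rw [mul_add, add_mul, add_mul, mul_sub, sub_mul, sub_mul, hN]
    have h2 : (2:ℂ)⁻¹ * 2⁻¹ = (4:ℂ)⁻¹ := by norm_num
    rw [h2]
    module
  constructor
  · -- left inequality
    have hB : (H + K).IsHermitian := hH.add hK
    have hC : (H - K).IsHermitian := hH.sub hK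
    have hpsd : (((2 : ℝ) : ℂ) • (Aᴴ * A) - (H + K)ᴴ * (H + K)).PosSemidef := by
      have heq : ((2 : ℝ) : ℂ) • (Aᴴ * A) - (H + K)ᴴ * (H + K) = (H - K)ᴴ * (H - K) := by
        rw [hB.eq, hC.eq, hsum]
        rw [mul_add, add_mul, add_mul, mul_sub, sub_mul, sub_mul]
        push_cast
        rw [two_smul]
        abel
      rw [heq]
      exact posSemidef_conjTranspose_mul_self (H - K)
    have hw := weyl (isHermitian_conjTranspose_mul_self (H + K))
      (isHermitian_conjTranspose_mul_self A) (by norm_num : (0:ℝ) ≤ 2) hpsd j.rev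
    unfold sv
    have hs := Real.sqrt_le_sqrt hw
    rw [Real.sqrt_mul (by norm_num : (0:ℝ) ≤ 2)] at hs
    calc (1 / Real.sqrt 2) * Real.sqrt ((isHermitian_conjTranspose_mul_self (H + K)).eigenvalues
          (Tuple.sort ((isHermitian_conjTranspose_mul_self (H + K)).eigenvalues) j.rev))
        ≤ (1 / Real.sqrt 2) * (Real.sqrt 2 * Real.sqrt
            ((isHermitian_conjTranspose_mul_self A).eigenvalues
              (Tuple.sort ((isHermitian_conjTranspose_mul_self A).eigenvalues) j.rev))) := by
          refine mul_le_mul_of_nonneg_left hs (by positivity)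
    _ = _ := by
          rw [← mul_assoc, one_div, inv_mul_cancel₀ (by positivity : Real.sqrt 2 ≠ 0), one_mul]
  · -- right inequality
    have hAbsH : (matAbs H).PosSemidef := by
      unfold matAbs; exact posSemidef_psdSqrt (posSemidef_conjTranspose_mul_self H)
    have hAbsK : (matAbs K).PosSemidef := by
      unfold matAbs; exact posSemidef_psdSqrt (posSemidef_conjTranspose_mul_self K)
    have hR : (matAbs H + matAbs K).IsHermitian := hAbsH.1.add hAbsK.1
    have cH : Commute K (matAbs H) := by
      rw [matAbs_eq_mcfc hH]
      exact commute_mcfc hH _ hComm.symm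
    have cHK : Commute (matAbs H) (matAbs K) := by
      have := commute_mcfc hK (fun t => |t|) cH.symm
      rwa [← matAbs_eq_mcfc hK] at this
    have hXX : matAbs H * matAbs H = H * H := by
      have := psdSqrt_mul_self (posSemidef_conjTranspose_mul_self H)
      unfold matAbs
      rw [this, hH.eq]
    have hYY : matAbs K * matAbs K = K * K := by
      have := psdSqrt_mul_self (posSemidef_conjTranspose_mul_self K)
      unfold matAbs
      rw [this, hK.eq]
    have hpsd : (((1 : ℝ) : ℂ) • ((matAbs H + matAbs K)ᴴ * (matAbs H + matAbs K))
        - Aᴴ * A).PosSemidef := by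
      have heq : ((1 : ℝ) : ℂ) • ((matAbs H + matAbs K)ᴴ * (matAbs H + matAbs K)) - Aᴴ * A
          = matAbs H * matAbs K + matAbs K * matAbs H := by
        rw [Complex.ofReal_one, one_smul, hR.eq, hsum]
        rw [mul_add, add_mul, add_mul, hXX, hYY]
        abel
      rw [heq]
      exact (posSemidef_mul_of_commute hAbsH hAbsK cHK).add
        (posSemidef_mul_of_commute hAbsK hAbsH cHK.symm)
    have hw := weyl (isHermitian_conjTranspose_mul_self A)
      (isHermitian_conjTranspose_mul_self (matAbs H + matAbs K))
      (by norm_num : (0:ℝ) ≤ 1) hpsd j.rev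
    rw [one_mul] at hw
    unfold sv
    exact Real.sqrt_le_sqrt hw
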